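/- Let s > 0 with s not a positive integer, set ν = s − [s] ∈ (0,1), and let u be a Schwartz function on ℝ. Then the exact identity ∫_0^∞ ρ^{2s−1} |φ_{[s],0}(u, ρ)| dρ = 4^{−(s+1)} ( ∫_ℝ |z|^{2ν−1}/(1+z²) dz ) · ‖u‖²_{Ḣ^s(ℝ)} holds. -/

import Mathlib

open MeasureTheory Complex

/-- The Fourier transform with normalization `û(ζ) = (2π)^{-1/2} ∫ e^{ixζ} u(x) dx`. -/
noncomputable def FT (u : ℝ → ℂ) (ζ : ℝ) : ℂ :=
  (Real.sqrt (2 * Real.pi) : ℂ)⁻¹ * ∫ x : ℝ, Complex.exp (Complex.I * x * ζ) * u x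

/-- The squared homogeneous Sobolev seminorm `‖u‖²_{Ḣ^s} = ∫ |ζ|^{2s} |û(ζ)|² dζ`. -/
noncomputable def homSobNormSq (s : ℝ) (u : ℝ → ℂ) : ℝ :=
  ∫ ζ : ℝ, |ζ| ^ (2 * s) * ‖FT u ζ‖ ^ 2

/-- `φ_{L,0}(u,ρ) = ((−1)^L/(2^{2L+1}ρ^{2L})) ∫ ζ^{2L+2}|û(ζ)|²/(ζ²+4ρ²) dζ`. -/
noncomputable def phiL0 (L : ℕ) (u : ℝ → ℂ) (ρ : ℝ) : ℝ :=
  ((-1 : ℝ) ^ L / (2 ^ (2 * L + 1) * ρ ^ (2 * L)))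
    * ∫ ζ : ℝ, ζ ^ (2 * L + 2) * ‖FT u ζ‖ ^ 2 / (ζ ^ 2 + 4 * ρ ^ 2)

open Real Set in
lemma FT_eq_fourierIntegral (u : ℝ → ℂ) (ζ : ℝ) :
    FT u ζ = (Real.sqrt (2 * Real.pi) : ℂ)⁻¹
      * FourierTransform.fourier u (-ζ / (2 * Real.pi)) := by
  rw [Real.fourier_real_eq_integral_exp_smul]
  unfold FT
  congr 1
  have h : ∀ x : ℝ, Complex.exp (Complex.I * x * ζ)
      = Complex.exp (↑(-2 * π * x * (-ζ / (2 * π))) * Complex.I) := by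
    intro x
    congr 1
    have hπ : (π : ℝ) ≠ 0 := Real.pi_ne_zero
    have : (-2 * π * x * (-ζ / (2 * π))) = x * ζ := by field_simp
    rw [this]
    push_cast
    ring
  simp only [h, smul_eq_mul]


open Real Set SchwartzMap in
lemma FT_continuous (u : SchwartzMap ℝ ℂ) : Continuous (FT ⇑u) := by
  have h : FT ⇑u = fun ζ => (Real.sqrt (2 * π) : ℂ)⁻¹
      * (SchwartzMap.fourierTransformCLM ℂ u) (-ζ / (2 * π)) := by
    funext ζ
    rw [FT_eq_fourierIntegral, SchwartzMap.fourierTransformCLM_apply, SchwartzMap.fourier_coe]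
  rw [h]
  exact continuous_const.mul
    ((SchwartzMap.fourierTransformCLM ℂ u).continuous.comp (by continuity))

open Real Set SchwartzMap in
lemma FT_norm_sq_bound (u : SchwartzMap ℝ ℂ) (m : ℕ) :
    ∃ D : ℝ, 0 ≤ D ∧ ∀ ζ : ℝ, ‖FT (⇑u) ζ‖ ^ 2 ≤ D / (1 + |ζ|) ^ (2 * m) := by
  set V := SchwartzMap.fourierTransformCLM ℂ u with hV
  obtain ⟨C, hC0, hC⟩ : ∃ C : ℝ, 0 ≤ C ∧ ∀ y : ℝ, (1 + |y|) ^ m * ‖V y‖ ≤ C := by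
    refine ⟨2 ^ m * (Finset.Iic (m, 0)).sup
      (fun p => SchwartzMap.seminorm ℝ p.1 p.2) V, ?_, ?_⟩
    · positivity
    · intro y
      have := SchwartzMap.one_add_le_sup_seminorm_apply (𝕜 := ℝ) (m := (m, 0))
        le_rfl le_rfl V y
      simpa [norm_iteratedFDeriv_zero, Real.norm_eq_abs] using this
  have h2π : (1 : ℝ) ≤ 2 * π := by nlinarith [Real.pi_gt_three]
  refine ⟨(C * (2 * π) ^ m) ^ 2, by positivity, fun ζ => ?_⟩
  have hb : (0 : ℝ) < 1 + |ζ| := by positivity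
  have key : ‖FT (⇑u) ζ‖ ≤ (C * (2 * π) ^ m) / (1 + |ζ|) ^ m := by
    have h1 : ‖FT (⇑u) ζ‖ ≤ ‖V (-ζ / (2 * π))‖ := by
      rw [FT_eq_fourierIntegral]
      have : ‖(Real.sqrt (2 * π) : ℂ)⁻¹‖ ≤ 1 := by
        rw [norm_inv, Complex.norm_real, Real.norm_eq_abs,
          _root_.abs_of_nonneg (Real.sqrt_nonneg _)]
        apply inv_le_one_of_one_le₀
        nlinarith [Real.sq_sqrt (show (0:ℝ) ≤ 2*π by linarith), Real.sqrt_nonneg (2*π)]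
      calc ‖(Real.sqrt (2 * π) : ℂ)⁻¹ * FourierTransform.fourier (⇑u) (-ζ / (2*π))‖
          = ‖(Real.sqrt (2 * π) : ℂ)⁻¹‖ * ‖FourierTransform.fourier (⇑u) (-ζ / (2*π))‖ :=
            norm_mul _ _
        _ ≤ 1 * ‖FourierTransform.fourier (⇑u) (-ζ / (2*π))‖ :=
            mul_le_mul_of_nonneg_right this (norm_nonneg _)
        _ = ‖V (-ζ / (2*π))‖ := by
            rw [one_mul, hV, SchwartzMap.fourierTransformCLM_apply, SchwartzMap.fourier_coe]
    have hy : |(-ζ / (2 * π))| = |ζ| / (2 * π) := by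
      rw [abs_div, abs_neg, abs_of_pos (by linarith : (0:ℝ) < 2 * π)]
    have h3 : (1 + |ζ|) ^ m ≤ (2 * π) ^ m * (1 + |(-ζ / (2 * π))|) ^ m := by
      rw [← mul_pow]
      apply pow_le_pow_left₀ hb.le
      rw [hy]
      have : 2 * π * (1 + |ζ| / (2 * π)) = 2 * π + |ζ| := by field_simp
      rw [this]; linarith
    have h4 : ‖V (-ζ / (2 * π))‖ * (1 + |ζ|) ^ m ≤ C * (2 * π) ^ m := by
      calc ‖V (-ζ / (2 * π))‖ * (1 + |ζ|) ^ m
          ≤ ‖V (-ζ / (2 * π))‖ * ((2 * π) ^ m * (1 + |(-ζ / (2 * π))|) ^ m) :=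
            mul_le_mul_of_nonneg_left h3 (norm_nonneg _)
        _ = ((1 + |(-ζ / (2 * π))|) ^ m * ‖V (-ζ / (2 * π))‖) * (2 * π) ^ m := by ring
        _ ≤ C * (2 * π) ^ m :=
            mul_le_mul_of_nonneg_right (hC _) (by positivity)
    calc ‖FT (⇑u) ζ‖ ≤ ‖V (-ζ / (2 * π))‖ := h1
      _ ≤ (C * (2 * π) ^ m) / (1 + |ζ|) ^ m := by
          rw [le_div_iff₀ (by positivity)]
          exact h4
  calc ‖FT (⇑u) ζ‖ ^ 2 ≤ ((C * (2 * π) ^ m) / (1 + |ζ|) ^ m) ^ 2 :=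
        pow_le_pow_left₀ (norm_nonneg _) key 2
    _ = (C * (2 * π) ^ m) ^ 2 / (1 + |ζ|) ^ (2 * m) := by
        rw [div_pow, ← pow_mul, mul_comm m 2]

open Real Set in
lemma integrable_pow_mul_FT (u : SchwartzMap ℝ ℂ) (n : ℕ) :
    Integrable (fun ζ : ℝ => (1 + |ζ|) ^ n * ‖FT (⇑u) ζ‖ ^ 2) := by
  obtain ⟨D, hD0, hD⟩ := FT_norm_sq_bound u (n + 1)
  have hr : (Module.finrank ℝ ℝ : ℝ) < ((n + 2 : ℕ) : ℝ) := by
    simp [Module.finrank_self]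
    push_cast
    linarith
  have hint : Integrable (fun ζ : ℝ => D * (1 + ‖ζ‖) ^ (-((n + 2 : ℕ) : ℝ))) :=
    (integrable_one_add_norm hr).const_mul D
  apply hint.mono'
  · exact ((continuous_const.add _root_.continuous_abs).pow n |>.mul
      (((FT_continuous u).norm).pow 2)).aestronglyMeasurable
  · refine Filter.Eventually.of_forall fun ζ => ?_
    have hb : (0 : ℝ) < 1 + |ζ| := by positivity
    have h1 : ‖(1 + |ζ|) ^ n * ‖FT (⇑u) ζ‖ ^ 2‖ = (1 + |ζ|) ^ n * ‖FT (⇑u) ζ‖ ^ 2 := by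
      rw [Real.norm_eq_abs, _root_.abs_of_nonneg (by positivity)]
    rw [h1]
    have h2 : (1 + ‖ζ‖) ^ (-((n + 2 : ℕ) : ℝ)) = ((1 + |ζ|) ^ (n + 2 : ℕ))⁻¹ := by
      rw [Real.norm_eq_abs, Real.rpow_neg hb.le, Real.rpow_natCast]
    rw [h2]
    calc (1 + |ζ|) ^ n * ‖FT (⇑u) ζ‖ ^ 2
        ≤ (1 + |ζ|) ^ n * (D / (1 + |ζ|) ^ (2 * (n + 1))) :=
          mul_le_mul_of_nonneg_left (hD ζ) (by positivity)
      _ = D * ((1 + |ζ|) ^ (n + 2 : ℕ))⁻¹ := by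
          rw [show 2 * (n + 1) = n + (n + 2) by ring, pow_add]
          field_simp


open Real Set in
lemma intf {ν : ℝ} (hν0 : 0 < ν) (hν1 : ν < 1) :
    IntegrableOn (fun z : ℝ => z ^ (2 * ν - 1) / (1 + z ^ 2)) (Set.Ioi 0) := by
  have hmeas : Measurable (fun z : ℝ => z ^ (2 * ν - 1) / (1 + z ^ 2)) :=
    (measurable_id.pow measurable_const).div
      ((measurable_const.add (measurable_id.pow measurable_const)))
  rw [← Set.Ioc_union_Ioi_eq_Ioi (zero_le_one (α := ℝ)) ]
  apply MeasureTheory.IntegrableOn.union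
  · have hbase : IntegrableOn (fun z : ℝ => z ^ (2 * ν - 1)) (Set.Ioc (0:ℝ) 1) := by
      have := intervalIntegral.intervalIntegrable_rpow' (a := 0) (b := 1)
        (show (-1:ℝ) < 2 * ν - 1 by linarith)
      rwa [intervalIntegrable_iff_integrableOn_Ioc_of_le zero_le_one] at this
    apply hbase.mono' (hmeas.aestronglyMeasurable.restrict)
    rw [MeasureTheory.ae_restrict_iff' measurableSet_Ioc]
    refine Filter.Eventually.of_forall fun z hz => ?_
    have hz0 : 0 < z := hz.1
    have hnum : 0 ≤ z ^ (2 * ν - 1) := Real.rpow_nonneg hz0.le _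
    rw [Real.norm_eq_abs, _root_.abs_of_nonneg (div_nonneg hnum (by positivity))]
    exact div_le_self hnum (by nlinarith)
  · have hbase : IntegrableOn (fun z : ℝ => z ^ (2 * ν - 3)) (Set.Ioi (1:ℝ)) :=
      (integrableOn_Ioi_rpow_iff zero_lt_one).mpr (by linarith)
    apply hbase.mono' (hmeas.aestronglyMeasurable.restrict)
    rw [MeasureTheory.ae_restrict_iff' measurableSet_Ioi]
    refine Filter.Eventually.of_forall fun z hz => ?_
    have hz0 : (0:ℝ) < z := lt_trans zero_lt_one hz
    have hnum : 0 ≤ z ^ (2 * ν - 1) := Real.rpow_nonneg hz0.le _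
    rw [Real.norm_eq_abs, _root_.abs_of_nonneg (div_nonneg hnum (by positivity))]
    have h1 : z ^ (2 * ν - 3) = z ^ (2 * ν - 1) / z ^ (2:ℝ) := by
      rw [← Real.rpow_sub hz0]
      norm_num
      ring_nf
    rw [h1, Real.rpow_two]
    exact div_le_div_of_nonneg_left hnum (by positivity) (by nlinarith)


open Real Set in
lemma rho_int {ν : ℝ} (hν0 : 0 < ν) (hν1 : ν < 1) {ζ : ℝ} (hζ : ζ ≠ 0) :
    IntegrableOn (fun ρ : ℝ => ρ ^ (2 * ν - 1) / (ζ ^ 2 + 4 * ρ ^ 2)) (Set.Ioi 0) ∧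
    ∫ ρ in Set.Ioi (0:ℝ), ρ ^ (2 * ν - 1) / (ζ ^ 2 + 4 * ρ ^ 2)
      = (2:ℝ) ^ (-(2 * ν)) * |ζ| ^ (2 * ν - 2)
        * ∫ z in Set.Ioi (0:ℝ), z ^ (2 * ν - 1) / (1 + z ^ 2) := by
  set f : ℝ → ℝ := fun z => z ^ (2 * ν - 1) / (1 + z ^ 2) with hf
  set a : ℝ := |ζ| / 2 with ha
  have ha0 : 0 < a := by
    have : 0 < |ζ| := abs_pos.mpr hζ
    positivity
  have hA0 : 0 < a ^ (2 * ν - 1) := Real.rpow_pos_of_pos ha0 _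
  have hζsq : ζ ^ 2 = 4 * a ^ 2 := by
    rw [ha]
    rw [div_pow, ← _root_.sq_abs ζ]
    ring
  -- pointwise identity on Ioi 0
  have hpt : ∀ ρ ∈ Set.Ioi (0:ℝ), ρ ^ (2 * ν - 1) / (ζ ^ 2 + 4 * ρ ^ 2)
      = (a ^ (2 * ν - 3) / 4) * f (a⁻¹ * ρ) := by
    intro ρ hρ
    have hρ0 : (0:ℝ) < ρ := hρ
    have e1 : (a⁻¹ * ρ) ^ (2 * ν - 1) = (a ^ (2 * ν - 1))⁻¹ * ρ ^ (2 * ν - 1) := by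
      rw [Real.mul_rpow (by positivity) hρ0.le, Real.inv_rpow ha0.le]
    have e2 : a ^ (2 * ν - 3) = a ^ (2 * ν - 1) / a ^ (2:ℝ) := by
      rw [← Real.rpow_sub ha0]; ring_nf
    rw [hf]
    simp only []
    rw [Real.rpow_two] at e2
    rw [e1, e2, hζsq]
    have hden : (0:ℝ) < 1 + (a⁻¹ * ρ) ^ 2 := by positivity
    field_simp
  -- integrability
  have hcomp : IntegrableOn (fun ρ : ℝ => f (a⁻¹ * ρ)) (Set.Ioi 0) := by
    have := (integrableOn_Ioi_comp_mul_left_iff f 0 (inv_pos.mpr ha0)).mpr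
    rw [mul_zero] at this
    exact this (intf hν0 hν1)
  constructor
  · exact MeasureTheory.IntegrableOn.congr_fun (hcomp.const_mul (a ^ (2 * ν - 3) / 4))
      (fun ρ hρ => (hpt ρ hρ).symm) measurableSet_Ioi
  · rw [MeasureTheory.setIntegral_congr_fun measurableSet_Ioi hpt]
    rw [MeasureTheory.integral_const_mul]
    have hval : ∫ ρ in Set.Ioi (0:ℝ), f (a⁻¹ * ρ) = a * ∫ z in Set.Ioi (0:ℝ), f z := by
      have := integral_comp_mul_left_Ioi f 0 (inv_pos.mpr ha0)
      rw [mul_zero, inv_inv, smul_eq_mul] at this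
      exact this
    rw [hval]
    have hconst : a ^ (2 * ν - 3) / 4 * a = (2:ℝ) ^ (-(2 * ν)) * |ζ| ^ (2 * ν - 2) := by
      have e4 : a ^ (2 * ν - 3) * a = a ^ (2 * ν - 2) := by
        nth_rewrite 2 [show a = a ^ (1:ℝ) from (Real.rpow_one a).symm]
        rw [← Real.rpow_add ha0]; ring_nf
      have e5 : a ^ (2 * ν - 2) = |ζ| ^ (2 * ν - 2) / (2:ℝ) ^ (2 * ν - 2) := by
        rw [ha, Real.div_rpow (abs_nonneg ζ) (by norm_num)]
      have h42 : (2:ℝ) ^ (2:ℝ) = 4 := by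
        have h := Real.rpow_natCast (2:ℝ) 2
        rw [show (((2:ℕ)):ℝ) = (2:ℝ) by norm_num] at h
        rw [h]; norm_num
      have e6 : (2:ℝ) ^ (2 * ν - 2) * 4 = (2:ℝ) ^ (2 * ν) := by
        rw [← h42, ← Real.rpow_add (by norm_num : (0:ℝ) < 2)]
        norm_num
      calc a ^ (2 * ν - 3) / 4 * a = a ^ (2 * ν - 2) / 4 := by rw [← e4]; ring
        _ = |ζ| ^ (2 * ν - 2) / ((2:ℝ) ^ (2 * ν - 2) * 4) := by rw [e5]; ring
        _ = |ζ| ^ (2 * ν - 2) / (2:ℝ) ^ (2 * ν) := by rw [e6]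
        _ = (2:ℝ) ^ (-(2 * ν)) * |ζ| ^ (2 * ν - 2) := by
            rw [Real.rpow_neg (by norm_num : (0:ℝ) ≤ 2)]; ring
    rw [← hconst]
    ring

/-- The exact identity
`∫_0^∞ ρ^{2s−1}|φ_{[s],0}(u,ρ)| dρ = 4^{−(s+1)} (∫ |z|^{2ν−1}/(1+z²) dz) ‖u‖²_{Ḣ^s}`
for noninteger `s > 0`, where `ν = s − [s]`. -/
theorem phiL0_exact_identity (s : ℝ) (hs : 0 < s) (hns : ∀ n : ℕ, 0 < n → s ≠ n)
    (u : SchwartzMap ℝ ℂ) :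
    (∫ ρ in Set.Ioi (0 : ℝ), ρ ^ (2 * s - 1) * |phiL0 ⌊s⌋₊ (⇑u) ρ|)
      = (4 : ℝ) ^ (-(s + 1))
        * (∫ z : ℝ, |z| ^ (2 * (s - ⌊s⌋₊) - 1) / (1 + z ^ 2))
        * homSobNormSq s (⇑u) := by
  set L : ℕ := ⌊s⌋₊ with hLdef
  have hLle : ((L : ℝ)) ≤ s := Nat.floor_le hs.le
  have hsL : s < (L : ℝ) + 1 := Nat.lt_floor_add_one s
  have hLne : ((L : ℝ)) ≠ s := by
    intro h
    rcases Nat.eq_zero_or_pos L with h0 | hpos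
    · rw [h0] at h; norm_num at h; exact absurd h.symm hs.ne'
    · exact hns L hpos h.symm
  have hν0 : 0 < s - (L : ℝ) := lt_of_le_of_ne (by linarith) (fun h => hLne (by linarith))
  have hν1 : s - (L : ℝ) < 1 := by linarith
  have hg0 : ∀ ζ : ℝ, (0:ℝ) ≤ ‖FT (⇑u) ζ‖ ^ 2 := fun ζ => sq_nonneg _
  have hgc : Continuous fun ζ : ℝ => ‖FT (⇑u) ζ‖ ^ 2 := ((FT_continuous u).norm).pow 2
  have heven : Even (2 * L + 2) := ⟨L + 1, by ring⟩
  have hq0 : ∀ ρ ζ : ℝ, 0 ≤ ζ ^ (2*L+2) * ‖FT (⇑u) ζ‖^2 / (ζ^2 + 4*ρ^2) :=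
    fun ρ ζ => div_nonneg (mul_nonneg (heven.pow_nonneg ζ) (hg0 ζ)) (by positivity)
  have hq_sm : StronglyMeasurable
      (fun p : ℝ × ℝ => p.2 ^ (2*L+2) * ‖FT (⇑u) p.2‖^2 / (p.2^2 + 4*p.1^2)) := by
    apply Measurable.stronglyMeasurable
    exact (((continuous_snd.pow _).mul (hgc.comp continuous_snd)).measurable).div
      (((continuous_snd.pow 2).add (continuous_const.mul (continuous_fst.pow 2))).measurable)
  have hMaster : Integrable (fun ζ : ℝ => (1+|ζ|)^(2*L+2) * ‖FT (⇑u) ζ‖^2) :=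
    integrable_pow_mul_FT u (2*L+2)
  have hpow_le : ∀ ζ : ℝ, ζ ^ (2*L+2) ≤ (1+|ζ|)^(2*L+2) := by
    intro ζ
    rw [← heven.pow_abs ζ]
    exact pow_le_pow_left₀ (abs_nonneg ζ) (by linarith [abs_nonneg ζ]) _
  have hq_int : ∀ ρ : ℝ, 0 < ρ →
      Integrable (fun ζ : ℝ => ζ^(2*L+2) * ‖FT (⇑u) ζ‖^2 / (ζ^2 + 4*ρ^2)) := by
    intro ρ hρ
    have h4ρ : (0:ℝ) < 4*ρ^2 := by positivity
    apply (hMaster.const_mul ((4*ρ^2)⁻¹)).mono'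
    · apply Continuous.aestronglyMeasurable
      apply Continuous.div ((continuous_id.pow _).mul hgc)
        ((continuous_pow 2).add continuous_const)
      intro ζ; simp only [Pi.add_apply]; nlinarith [sq_nonneg ζ]
    · refine Filter.Eventually.of_forall fun ζ => ?_
      rw [Real.norm_eq_abs, _root_.abs_of_nonneg (hq0 ρ ζ)]
      calc ζ^(2*L+2) * ‖FT (⇑u) ζ‖^2 / (ζ^2+4*ρ^2)
          ≤ (1+|ζ|)^(2*L+2) * ‖FT (⇑u) ζ‖^2 / (4*ρ^2) :=
            div_le_div₀ (by positivity)
              (mul_le_mul_of_nonneg_right (hpow_le ζ) (hg0 ζ)) h4ρ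
              (by nlinarith [sq_nonneg ζ])
        _ = (4*ρ^2)⁻¹ * ((1+|ζ|)^(2*L+2) * ‖FT (⇑u) ζ‖^2) := by ring
  have hint_s : Integrable (fun ζ : ℝ => |ζ| ^ (2*s) * ‖FT (⇑u) ζ‖^2) := by
    apply hMaster.mono'
    · exact ((_root_.continuous_abs.measurable.pow measurable_const).mul
        hgc.measurable).aestronglyMeasurable
    · refine Filter.Eventually.of_forall fun ζ => ?_
      rw [Real.norm_eq_abs, _root_.abs_of_nonneg
        (mul_nonneg (Real.rpow_nonneg (abs_nonneg ζ) _) (hg0 ζ))]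
      refine mul_le_mul_of_nonneg_right ?_ (hg0 ζ)
      calc |ζ| ^ (2*s) ≤ (1+|ζ|)^(2*s) :=
            Real.rpow_le_rpow (abs_nonneg ζ) (by linarith [abs_nonneg ζ]) (by positivity)
        _ ≤ (1+|ζ|)^(((2*L+2:ℕ)):ℝ) :=
            Real.rpow_le_rpow_of_exponent_le (by linarith [abs_nonneg ζ])
              (by push_cast; linarith)
        _ = (1+|ζ|)^(2*L+2:ℕ) := Real.rpow_natCast _ _
  have hX0 : 0 ≤ ∫ ζ : ℝ, |ζ| ^ (2*s) * ‖FT (⇑u) ζ‖^2 :=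
    integral_nonneg fun ζ => mul_nonneg (Real.rpow_nonneg (abs_nonneg ζ) _) (hg0 ζ)
  have hI0 : 0 ≤ ∫ z in Set.Ioi (0:ℝ), z^(2*(s-(L:ℝ))-1)/(1+z^2) :=
    setIntegral_nonneg measurableSet_Ioi
      (fun z hz => div_nonneg (Real.rpow_nonneg (le_of_lt hz) _) (by positivity))
  -- Claim A
  have hA : ∀ ρ ∈ Set.Ioi (0:ℝ), ρ ^ (2*s-1) * |phiL0 L (⇑u) ρ|
      = ((2:ℝ)^(2*L+1))⁻¹ * (ρ^(2*(s-(L:ℝ))-1)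
          * ∫ ζ : ℝ, ζ^(2*L+2)*‖FT (⇑u) ζ‖^2/(ζ^2+4*ρ^2)) := by
    intro ρ hρ
    have hρ0 : (0:ℝ) < ρ := hρ
    have hP0 : 0 ≤ ∫ ζ : ℝ, ζ^(2*L+2)*‖FT (⇑u) ζ‖^2/(ζ^2+4*ρ^2) :=
      integral_nonneg (hq0 ρ)
    have hc' : |((-1:ℝ))^L / ((2:ℝ)^(2*L+1) * ρ^(2*L))|
        = ((2:ℝ)^(2*L+1) * ρ^(2*L))⁻¹ := by
      rw [abs_div, _root_.abs_pow, abs_neg, abs_one, one_pow,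
        _root_.abs_of_pos (by positivity : (0:ℝ) < (2:ℝ)^(2*L+1) * ρ^(2*L))]
      exact one_div _
    rw [phiL0, abs_mul, hc', _root_.abs_of_nonneg hP0]
    have hrpow : ρ^(2*(s-(L:ℝ))-1) = ρ^(2*s-1) / ρ^(2*L:ℕ) := by
      rw [← Real.rpow_natCast ρ (2*L), ← Real.rpow_sub hρ0]
      congr 1
      push_cast; ring
    rw [hrpow]
    have h2L : ((2:ℝ)^(2*L+1)) ≠ 0 := by positivity
    have hρL : (ρ:ℝ)^(2*L) ≠ 0 := by positivity
    field_simp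
    try ring
  have hLHS1 : (∫ ρ in Set.Ioi (0:ℝ), ρ^(2*s-1) * |phiL0 L (⇑u) ρ|)
      = ((2:ℝ)^(2*L+1))⁻¹ * ∫ ρ in Set.Ioi (0:ℝ), ρ^(2*(s-(L:ℝ))-1)
          * ∫ ζ : ℝ, ζ^(2*L+2)*‖FT (⇑u) ζ‖^2/(ζ^2+4*ρ^2) := by
    rw [MeasureTheory.setIntegral_congr_fun measurableSet_Ioi hA,
      MeasureTheory.integral_const_mul]
  -- Claim B
  have h_pull : ∀ ρ : ℝ, ρ^(2*(s-(L:ℝ))-1)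
        * (∫ ζ : ℝ, ζ^(2*L+2)*‖FT (⇑u) ζ‖^2/(ζ^2+4*ρ^2))
      = ∫ ζ : ℝ, ρ^(2*(s-(L:ℝ))-1) * (ζ^(2*L+2)*‖FT (⇑u) ζ‖^2/(ζ^2+4*ρ^2)) :=
    fun ρ => (MeasureTheory.integral_const_mul _ _).symm
  have hK_sm : StronglyMeasurable (fun p : ℝ × ℝ =>
      p.1^(2*(s-(L:ℝ))-1) * (p.2^(2*L+2)*‖FT (⇑u) p.2‖^2/(p.2^2+4*p.1^2))) :=
    ((measurable_fst.pow measurable_const).mul hq_sm.measurable).stronglyMeasurable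
  have hB : (∫ ρ in Set.Ioi (0:ℝ), ρ^(2*(s-(L:ℝ))-1)
        * ∫ ζ : ℝ, ζ^(2*L+2)*‖FT (⇑u) ζ‖^2/(ζ^2+4*ρ^2))
      = ((2:ℝ)^(-(2*(s-(L:ℝ)))) * ∫ z in Set.Ioi (0:ℝ), z^(2*(s-(L:ℝ))-1)/(1+z^2))
        * ∫ ζ : ℝ, |ζ| ^ (2*s) * ‖FT (⇑u) ζ‖^2 := by
    simp only [h_pull]
    have hIntSM : AEStronglyMeasurable (fun ρ : ℝ => ∫ ζ : ℝ,
        ρ^(2*(s-(L:ℝ))-1) * (ζ^(2*L+2)*‖FT (⇑u) ζ‖^2/(ζ^2+4*ρ^2)))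
        (volume.restrict (Set.Ioi 0)) :=
      (hK_sm.integral_prod_right').aestronglyMeasurable.restrict
    have hnn : 0 ≤ᵐ[volume.restrict (Set.Ioi (0:ℝ))] fun ρ => ∫ ζ : ℝ,
        ρ^(2*(s-(L:ℝ))-1) * (ζ^(2*L+2)*‖FT (⇑u) ζ‖^2/(ζ^2+4*ρ^2)) := by
      filter_upwards [MeasureTheory.self_mem_ae_restrict measurableSet_Ioi] with ρ hρ
      exact integral_nonneg fun ζ =>
        mul_nonneg (Real.rpow_nonneg (le_of_lt hρ) _) (hq0 ρ ζ)
    rw [MeasureTheory.integral_eq_lintegral_of_nonneg_ae hnn hIntSM]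
    have hinner : ∀ᵐ ρ ∂(volume.restrict (Set.Ioi (0:ℝ))),
        ENNReal.ofReal (∫ ζ : ℝ, ρ^(2*(s-(L:ℝ))-1)
          * (ζ^(2*L+2)*‖FT (⇑u) ζ‖^2/(ζ^2+4*ρ^2)))
        = ∫⁻ ζ : ℝ, ENNReal.ofReal (ρ^(2*(s-(L:ℝ))-1)
          * (ζ^(2*L+2)*‖FT (⇑u) ζ‖^2/(ζ^2+4*ρ^2))) := by
      filter_upwards [MeasureTheory.self_mem_ae_restrict measurableSet_Ioi] with ρ hρ
      exact MeasureTheory.ofReal_integral_eq_lintegral_ofReal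
        ((hq_int ρ hρ).const_mul _)
        (Filter.Eventually.of_forall fun ζ =>
          mul_nonneg (Real.rpow_nonneg (le_of_lt hρ) _) (hq0 ρ ζ))
    rw [lintegral_congr_ae hinner]
    have hswap : AEMeasurable (Function.uncurry fun ρ ζ : ℝ =>
        ENNReal.ofReal (ρ^(2*(s-(L:ℝ))-1) * (ζ^(2*L+2)*‖FT (⇑u) ζ‖^2/(ζ^2+4*ρ^2))))
        ((volume.restrict (Set.Ioi 0)).prod volume) :=
      (ENNReal.measurable_ofReal.comp hK_sm.measurable).aemeasurable
    rw [MeasureTheory.lintegral_lintegral_swap hswap]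
    have hζae : ∀ᵐ ζ : ℝ, ζ ≠ (0:ℝ) := by
      have h0 : volume ({(0:ℝ)} : Set ℝ) = 0 := measure_singleton 0
      filter_upwards [MeasureTheory.compl_mem_ae_iff.mpr h0] with ζ hζ
      simpa using hζ
    have hstep : ∀ᵐ ζ : ℝ, (∫⁻ ρ in Set.Ioi (0:ℝ), ENNReal.ofReal
          (ρ^(2*(s-(L:ℝ))-1) * (ζ^(2*L+2)*‖FT (⇑u) ζ‖^2/(ζ^2+4*ρ^2))))
        = ENNReal.ofReal (((2:ℝ)^(-(2*(s-(L:ℝ))))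
            * ∫ z in Set.Ioi (0:ℝ), z^(2*(s-(L:ℝ))-1)/(1+z^2))
          * (|ζ|^(2*s) * ‖FT (⇑u) ζ‖^2)) := by
      filter_upwards [hζae] with ζ hζ
      obtain ⟨hint_h, hval_h⟩ := rho_int hν0 hν1 hζ
      have hc0 : 0 ≤ ζ^(2*L+2) * ‖FT (⇑u) ζ‖^2 :=
        mul_nonneg (heven.pow_nonneg ζ) (hg0 ζ)
      have hre : ∀ ρ : ℝ,
          ENNReal.ofReal (ρ^(2*(s-(L:ℝ))-1) * (ζ^(2*L+2)*‖FT (⇑u) ζ‖^2/(ζ^2+4*ρ^2)))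
          = ENNReal.ofReal (ζ^(2*L+2) * ‖FT (⇑u) ζ‖^2)
            * ENNReal.ofReal (ρ^(2*(s-(L:ℝ))-1)/(ζ^2+4*ρ^2)) := by
        intro ρ
        rw [← ENNReal.ofReal_mul hc0]
        congr 1
        ring
      simp only [hre]
      rw [MeasureTheory.lintegral_const_mul' _ _ ENNReal.ofReal_ne_top]
      have hnn2 : 0 ≤ᵐ[volume.restrict (Set.Ioi (0:ℝ))]
          fun ρ : ℝ => ρ^(2*(s-(L:ℝ))-1)/(ζ^2+4*ρ^2) := by
        filter_upwards [MeasureTheory.self_mem_ae_restrict measurableSet_Ioi] with ρ hρ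
        exact div_nonneg (Real.rpow_nonneg (le_of_lt hρ) _) (by positivity)
      rw [← MeasureTheory.ofReal_integral_eq_lintegral_ofReal hint_h hnn2]
      rw [hval_h, ← ENNReal.ofReal_mul hc0]
      congr 1
      have habs : (ζ:ℝ)^(2*L+2) * |ζ|^(2*(s-(L:ℝ))-2) = |ζ|^(2*s) := by
        rw [← heven.pow_abs ζ, ← Real.rpow_natCast |ζ| (2*L+2),
          ← Real.rpow_add (abs_pos.mpr hζ)]
        congr 1
        push_cast; ring
      rw [← habs]
      ring
    rw [lintegral_congr_ae hstep]
    have hc20 : 0 ≤ (2:ℝ)^(-(2*(s-(L:ℝ))))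
        * ∫ z in Set.Ioi (0:ℝ), z^(2*(s-(L:ℝ))-1)/(1+z^2) :=
      mul_nonneg (Real.rpow_nonneg (by norm_num) _) hI0
    rw [← MeasureTheory.ofReal_integral_eq_lintegral_ofReal
      (hint_s.const_mul _)
      (Filter.Eventually.of_forall fun ζ => mul_nonneg hc20
        (mul_nonneg (Real.rpow_nonneg (abs_nonneg _) _) (hg0 ζ)))]
    rw [MeasureTheory.integral_const_mul]
    exact ENNReal.toReal_ofReal (mul_nonneg hc20 hX0)
  rw [hLHS1, hB]
  have hZ : (∫ z : ℝ, |z|^(2*(s-(L:ℝ))-1)/(1+z^2))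
      = 2 * ∫ z in Set.Ioi (0:ℝ), z^(2*(s-(L:ℝ))-1)/(1+z^2) := by
    have h1 : (fun z : ℝ => |z|^(2*(s-(L:ℝ))-1)/(1+z^2))
        = fun z : ℝ => (fun t : ℝ => t^(2*(s-(L:ℝ))-1)/(1+t^2)) |z| := by
      funext z; simp only [_root_.sq_abs]
    rw [h1]
    exact _root_.integral_comp_abs (f := fun t : ℝ => t^(2*(s-(L:ℝ))-1)/(1+t^2))
  rw [hZ]
  have hhom : homSobNormSq s ⇑u = ∫ ζ : ℝ, |ζ|^(2*s)*‖FT (⇑u) ζ‖^2 := rfl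
  rw [hhom]
  have key : ((2:ℝ)^(2*L+1))⁻¹ * (2:ℝ)^(-(2*(s-(L:ℝ)))) = (4:ℝ)^(-(s+1)) * 2 := by
    have h42 : (4:ℝ) = (2:ℝ)^(2:ℝ) := by
      have h := Real.rpow_natCast (2:ℝ) 2
      rw [show (((2:ℕ)):ℝ) = (2:ℝ) by norm_num] at h
      rw [h]; norm_num
    rw [show ((2:ℝ)^(2*L+1) : ℝ) = (2:ℝ)^(((2*L+1:ℕ)):ℝ) from (Real.rpow_natCast _ _).symm,
      ← Real.rpow_neg (by norm_num : (0:ℝ) ≤ 2),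
      ← Real.rpow_add (by norm_num : (0:ℝ) < 2), h42,
      ← Real.rpow_mul (by norm_num : (0:ℝ) ≤ 2),
      ← Real.rpow_add_one (by norm_num : (2:ℝ) ≠ 0)]
    congr 1
    push_cast; ring
  linear_combination ((∫ z in Set.Ioi (0:ℝ), z^(2*(s-(L:ℝ))-1)/(1+z^2))
    * (∫ ζ : ℝ, |ζ|^(2*s)*‖FT (⇑u) ζ‖^2)) * key
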